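/- Let P ∈ M_N(ℂ) be a nonzero orthogonal projection, let F_1,…,F_n ∈ M_N(ℂ), let η_1,…,η_n ∈ {+1,−1}, and let d_1,…,d_n ∈ ℝ satisfy P F_i† F_j P = δ_{ij} d_i P for all i, j. Suppose the negative part of the map vanishes on the code space, i.e. F_i P = 0 for every i with η_i = −1. Let ρ ∈ M_N(ℂ) be positive semidefinite and set M = Σ_{i=1}^n η_i · F_i (P ρ P) F_i†. Then: (i) M is positive semidefinite; and (ii) letting K = {k : η_k = +1 and d_k ≠ 0}, there exist unitary matrices U_k ∈ M_N(ℂ) for k ∈ K with F_k P = √(d_k) · U_k P such that the projectors P_k := U_k P U_k† are pairwise orthogonal (P_l P_k = 0 for l ≠ k in K) and the recovery map recovers the encoded state up to a nonnegative scalar: Σ_{k∈K} U_k† P_k M P_k U_k = (Σ_{k∈K} d_k) · (P ρ P). -/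

import Mathlib

open Matrix ComplexOrder

/-- **Theorem 2 (sufficient conditions for reversibility).** If the diagonalized QEC
conditions hold and the negative part of the map vanishes on the code space
(`F i * P = 0` whenever `η i = -1`), then for any positive semidefinite `ρ` the output
`M = ∑ i, η i • F i (P ρ P) (F i)ᴴ` is positive semidefinite, and there are unitaries
`U k` with `F k P = √(d k) • U k P` (for `k` with `η k = 1` and `d k ≠ 0`) whose rotated
projectors `P k = U k P (U k)ᴴ` are pairwise orthogonal, and the recovery map returns
`(∑ d k) • (P ρ P)`. -/
lemma aux_nonneg {N : ℕ} {P : Matrix (Fin N) (Fin N) ℂ} (hP : P ≠ 0) (hProj : P * P = P)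
    {c : ℝ} (h : ((c : ℂ) • P).PosSemidef) : 0 ≤ c := by
  have hv : ∃ v : Fin N → ℂ, P *ᵥ v ≠ 0 := by
    by_contra h'
    push_neg at h'
    apply hP
    apply Matrix.toLin'.map_eq_zero_iff.mp
    apply LinearMap.ext
    intro v
    simpa [Matrix.toLin'_apply] using h' v
  obtain ⟨v, hv⟩ := hv
  have h2 := h.dotProduct_mulVec_nonneg (P *ᵥ v)
  rw [Matrix.smul_mulVec, Matrix.mulVec_mulVec, hProj] at h2
  rw [dotProduct_smul] at h2
  have hpos : 0 < dotProduct (star (P *ᵥ v)) (P *ᵥ v) :=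
    dotProduct_star_self_pos_iff.mpr hv
  set s := dotProduct (star (P *ᵥ v)) (P *ᵥ v) with hs
  rw [Complex.lt_def] at hpos
  rw [Complex.le_def] at h2
  have h3 : 0 ≤ c * s.re := by
    have := h2.1
    simpa [smul_eq_mul, Complex.re_ofReal_mul] using this
  have hre : 0 < s.re := by simpa using hpos.1
  exact (mul_nonneg_iff_of_pos_right hre).mp h3

lemma aux_unitary {N : ℕ} (P A : Matrix (Fin N) (Fin N) ℂ)
    (hProj : P * P = P) (hA : Aᴴ * A = P) :
    ∃ U ∈ Matrix.unitaryGroup (Fin N) ℂ, A = U * P := by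
  classical
  have hPH : Pᴴ = P := by
    rw [← hA, conjTranspose_mul, conjTranspose_conjTranspose]
  have hAP : A * P = A := by
    have key : (A * P - A)ᴴ * (A * P - A) = 0 := by
      rw [conjTranspose_sub, conjTranspose_mul, hPH, sub_mul, mul_sub, mul_sub]
      have e1 : P * Aᴴ * (A * P) = P := by
        rw [Matrix.mul_assoc, ← Matrix.mul_assoc Aᴴ A P, hA, ← Matrix.mul_assoc, hProj, hProj]
      have e2 : P * Aᴴ * A = P := by rw [Matrix.mul_assoc, hA, hProj]
      have e3 : Aᴴ * (A * P) = P := by rw [← Matrix.mul_assoc, hA, hProj]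
      rw [e1, e2, e3, hA]
      simp
    have := Matrix.conjTranspose_mul_self_eq_zero.mp key
    rwa [sub_eq_zero] at this
  set e := LinearMap.toMatrixOrthonormal (𝕜 := ℂ) (EuclideanSpace.basisFun (Fin N) ℂ) with he
  set p : EuclideanSpace ℂ (Fin N) →ₗ[ℂ] EuclideanSpace ℂ (Fin N) := e.symm P with hp
  set a : EuclideanSpace ℂ (Fin N) →ₗ[ℂ] EuclideanSpace ℂ (Fin N) := e.symm A with ha
  have hstar : LinearMap.adjoint a * a = p := by
    rw [hp, ha, ← LinearMap.star_eq_adjoint, ← StarHomClass.map_star, ← _root_.map_mul,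
      Matrix.star_eq_conjTranspose, hA]
  have hpp : p * p = p := by rw [hp, ← _root_.map_mul, hProj]
  set S : Submodule ℂ (EuclideanSpace ℂ (Fin N)) := LinearMap.range p with hS
  have hfix : ∀ s : EuclideanSpace ℂ (Fin N), s ∈ S → p s = s := by
    rintro s ⟨x, rfl⟩
    have := congrArg (fun f => f x) hpp
    simpa [Module.End.mul_apply] using this
  have hnorm : ∀ s : S, ‖a s.val‖ = ‖s.val‖ := by
    intro s
    have hin : (inner ℂ (a s.val) (a s.val) : ℂ) = inner ℂ s.val s.val := by
      rw [← LinearMap.adjoint_inner_left, ← Module.End.mul_apply, hstar, hfix _ s.2]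
    rw [inner_self_eq_norm_sq_to_K, inner_self_eq_norm_sq_to_K] at hin
    have h2 : ‖a s.val‖ ^ 2 = ‖s.val‖ ^ 2 := by exact_mod_cast hin
    calc ‖a s.val‖ = Real.sqrt (‖a s.val‖ ^ 2) := (Real.sqrt_sq (norm_nonneg _)).symm
      _ = Real.sqrt (‖s.val‖ ^ 2) := by rw [h2]
      _ = ‖s.val‖ := Real.sqrt_sq (norm_nonneg _)
  set L : S →ₗᵢ[ℂ] EuclideanSpace ℂ (Fin N) :=
    ⟨a.comp S.subtype, fun s => hnorm s⟩ with hL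
  set u := L.extend with hu
  refine ⟨e u.toLinearMap, ?_, ?_⟩
  · rw [Matrix.mem_unitaryGroup_iff']
    have hadj : LinearMap.adjoint u.toLinearMap * u.toLinearMap = 1 := by
      apply LinearMap.ext
      intro x
      apply ext_inner_right ℂ
      intro y
      rw [Module.End.mul_apply, LinearMap.adjoint_inner_left]
      simpa using u.inner_map_map x y
    calc star (e u.toLinearMap) * e u.toLinearMap
        = e (LinearMap.adjoint u.toLinearMap * u.toLinearMap) := by
          rw [_root_.map_mul]
          congr 1
          rw [← LinearMap.star_eq_adjoint, StarHomClass.map_star]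
      _ = 1 := by rw [hadj, _root_.map_one]
  · suffices h : e.symm A = e.symm (e u.toLinearMap * P) by
      have := congrArg e h
      simpa using this
    rw [_root_.map_mul, e.symm_apply_apply, ← hp, ← ha]
    apply LinearMap.ext
    intro x
    have hmem : p x ∈ S := ⟨x, rfl⟩
    have h1 : u.toLinearMap (p x) = a (p x) := by
      have := L.extend_apply ⟨p x, hmem⟩
      exact this
    have h2 : a (p x) = a x := by
      have hap : a * p = a := by rw [ha, hp, ← _root_.map_mul, hAP]
      have := congrArg (fun f => f x) hap
      simpa [Module.End.mul_apply] using this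
    simp [Module.End.mul_apply, h1, h2]

set_option maxHeartbeats 1000000 in
theorem stmt_3 {N n : ℕ} (P : Matrix (Fin N) (Fin N) ℂ)
    (hP : P ≠ 0) (hProj : P * P = P) (hPH : Pᴴ = P)
    (F : Fin n → Matrix (Fin N) (Fin N) ℂ)
    (η : Fin n → ℝ) (hη : ∀ i, η i = 1 ∨ η i = -1)
    (d : Fin n → ℝ)
    (hQEC : ∀ i j, P * (F i)ᴴ * F j * P = (if i = j then (d i : ℂ) else 0) • P)
    (hnegvanish : ∀ i, η i = -1 → F i * P = 0)
    (ρ : Matrix (Fin N) (Fin N) ℂ) (hρ : ρ.PosSemidef) :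
    (∑ i, (η i : ℂ) • (F i * (P * ρ * P) * (F i)ᴴ)).PosSemidef ∧
    ∃ U : Fin n → Matrix (Fin N) (Fin N) ℂ,
      (∀ k ∈ Finset.univ.filter (fun k => η k = 1 ∧ d k ≠ 0),
        U k ∈ Matrix.unitaryGroup (Fin N) ℂ ∧
        F k * P = (Real.sqrt (d k) : ℂ) • (U k * P)) ∧
      (∀ k ∈ Finset.univ.filter (fun k => η k = 1 ∧ d k ≠ 0),
        ∀ l ∈ Finset.univ.filter (fun k => η k = 1 ∧ d k ≠ 0), l ≠ k →
        (U l * P * (U l)ᴴ) * (U k * P * (U k)ᴴ) = 0) ∧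
      ∑ k ∈ Finset.univ.filter (fun k => η k = 1 ∧ d k ≠ 0),
        (U k)ᴴ * (U k * P * (U k)ᴴ) *
          (∑ i, (η i : ℂ) • (F i * (P * ρ * P) * (F i)ᴴ)) *
          (U k * P * (U k)ᴴ) * U k =
        ((∑ k ∈ Finset.univ.filter (fun k => η k = 1 ∧ d k ≠ 0), d k : ℝ) : ℂ) •
          (P * ρ * P) := by
  classical
  -- nonnegativity of the d i
  have hdpos : ∀ i, 0 ≤ d i := by
    intro i
    apply aux_nonneg hP hProj
    have hq := hQEC i i
    rw [if_pos rfl] at hq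
    rw [← hq]
    have h2 : P * (F i)ᴴ * F i * P = (F i * P)ᴴ * (F i * P) := by
      rw [conjTranspose_mul, hPH]
      noncomm_ring
    rw [h2]
    exact Matrix.posSemidef_conjTranspose_mul_self (F i * P)
  -- part 1 : positivity
  have hterm : ∀ i, ((η i : ℂ) • (F i * (P * ρ * P) * (F i)ᴴ)).PosSemidef := by
    intro i
    rcases hη i with h | h
    · rw [h]
      simp only [Complex.ofReal_one, one_smul]
      have h2 : F i * (P * ρ * P) * (F i)ᴴ = (F i * P) * ρ * (F i * P)ᴴ := by
        rw [conjTranspose_mul, hPH]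
        noncomm_ring
      rw [h2]
      exact hρ.mul_mul_conjTranspose_same (F i * P)
    · have hz : F i * (P * ρ * P) = 0 := by
        rw [← Matrix.mul_assoc, ← Matrix.mul_assoc, hnegvanish i h, Matrix.zero_mul,
          Matrix.zero_mul]
      rw [hz, Matrix.zero_mul, smul_zero]
      exact Matrix.PosSemidef.zero
  have hpos : (∑ i, (η i : ℂ) • (F i * (P * ρ * P) * (F i)ᴴ)).PosSemidef :=
    Finset.sum_induction _ _ (fun _ _ ha hb => ha.add hb) Matrix.PosSemidef.zero
      (fun i _ => hterm i)
  refine ⟨hpos, ?_⟩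
  -- construct the unitaries
  have hUex : ∀ k : Fin n, ∃ U, (η k = 1 ∧ d k ≠ 0) →
      (U ∈ Matrix.unitaryGroup (Fin N) ℂ ∧
        F k * P = (Real.sqrt (d k) : ℂ) • (U * P)) := by
    intro k
    by_cases hk : η k = 1 ∧ d k ≠ 0
    · have hdk : 0 < d k := lt_of_le_of_ne (hdpos k) (Ne.symm hk.2)
      have hsq : (0 : ℝ) < Real.sqrt (d k) := Real.sqrt_pos.mpr hdk
      have hcne : ((Real.sqrt (d k) : ℝ) : ℂ) ≠ 0 := by exact_mod_cast hsq.ne'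
      set c : ℂ := (((Real.sqrt (d k) : ℝ) : ℂ))⁻¹ with hc
      have hstarc : star c = c := by
        rw [hc, ← Complex.ofReal_inv, Complex.star_def, Complex.conj_ofReal]
      have h1 : (F k * P)ᴴ * (F k * P) = (d k : ℂ) • P := by
        have h2 : (F k * P)ᴴ * (F k * P) = P * (F k)ᴴ * F k * P := by
          rw [conjTranspose_mul, hPH]
          noncomm_ring
        rw [h2, hQEC k k, if_pos rfl]
      have key : (c • (F k * P))ᴴ * (c • (F k * P)) = P := by
        rw [conjTranspose_smul, hstarc, Matrix.smul_mul, Matrix.mul_smul, smul_smul, h1,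
          smul_smul]
        have hone : c * c * (d k : ℂ) = 1 := by
          rw [hc, ← Complex.ofReal_inv, ← Complex.ofReal_mul, ← Complex.ofReal_mul]
          rw [show ((Real.sqrt (d k))⁻¹ * (Real.sqrt (d k))⁻¹ * d k : ℝ) = 1 by
            rw [← Real.mul_self_sqrt (le_of_lt hdk)]; field_simp; rw [Real.sqrt_sq hsq.le]]
          norm_num
        rw [hone, one_smul]
      obtain ⟨U, hUmem, hUeq⟩ := aux_unitary P (c • (F k * P)) hProj key
      refine ⟨U, fun _ => ⟨hUmem, ?_⟩⟩
      rw [← hUeq, smul_smul, hc, mul_inv_cancel₀ hcne, one_smul]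
    · exact ⟨1, fun h => absurd h hk⟩
  choose U hU using hUex
  have hK : ∀ k, k ∈ Finset.univ.filter (fun k => η k = 1 ∧ d k ≠ 0) →
      (η k = 1 ∧ d k ≠ 0) := fun k hk => (Finset.mem_filter.mp hk).2
  refine ⟨U, fun k hk => hU k (hK k hk), ?_, ?_⟩
  · -- orthogonality
    intro k hk l hl hlk
    obtain ⟨hUl, hFl⟩ := hU l (hK l hl)
    obtain ⟨hUk, hFk⟩ := hU k (hK k hk)
    have hQ := hQEC l k
    rw [if_neg hlk, zero_smul] at hQ
    have h1 : (F l * P)ᴴ * (F k * P) = 0 := by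
      have h2 : (F l * P)ᴴ * (F k * P) = P * (F l)ᴴ * F k * P := by
        rw [conjTranspose_mul, hPH]
        noncomm_ring
      rw [h2, hQ]
    rw [hFl, hFk, conjTranspose_smul, Matrix.smul_mul, Matrix.mul_smul, smul_smul] at h1
    have hdl : 0 < d l := lt_of_le_of_ne (hdpos l) (Ne.symm (hK l hl).2)
    have hdk : 0 < d k := lt_of_le_of_ne (hdpos k) (Ne.symm (hK k hk).2)
    have hne : star ((Real.sqrt (d l) : ℝ) : ℂ) * ((Real.sqrt (d k) : ℝ) : ℂ) ≠ 0 := by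
      apply mul_ne_zero
      · rw [Complex.star_def, Complex.conj_ofReal]
        exact_mod_cast (Real.sqrt_pos.mpr hdl).ne'
      · exact_mod_cast (Real.sqrt_pos.mpr hdk).ne'
    have h3 : (U l * P)ᴴ * (U k * P) = 0 := (smul_eq_zero.mp h1).resolve_left hne
    rw [conjTranspose_mul, hPH] at h3
    calc (U l * P * (U l)ᴴ) * (U k * P * (U k)ᴴ)
        = U l * (P * (U l)ᴴ * (U k * P)) * (U k)ᴴ := by noncomm_ring
      _ = 0 := by rw [h3]; simp
  · -- recovery
    have hterm2 : ∀ k ∈ Finset.univ.filter (fun k => η k = 1 ∧ d k ≠ 0),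
        (U k)ᴴ * (U k * P * (U k)ᴴ) *
          (∑ i, (η i : ℂ) • (F i * (P * ρ * P) * (F i)ᴴ)) *
          (U k * P * (U k)ᴴ) * U k = ((d k : ℝ) : ℂ) • (P * ρ * P) := by
      intro k hk
      obtain ⟨hk1, hk2⟩ := hK k hk
      obtain ⟨hUk, hFk⟩ := hU k (hK k hk)
      have hdk : 0 < d k := lt_of_le_of_ne (hdpos k) (Ne.symm hk2)
      set ck : ℂ := ((Real.sqrt (d k) : ℝ) : ℂ) with hck
      have hckne : ck ≠ 0 := by
        rw [hck]; exact_mod_cast (Real.sqrt_pos.mpr hdk).ne'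
      have hck2 : ck * ck = (d k : ℂ) := by
        rw [hck, ← Complex.ofReal_mul, Real.mul_self_sqrt (le_of_lt hdk)]
      have huu : (U k)ᴴ * U k = 1 := by
        have := Matrix.mem_unitaryGroup_iff'.mp hUk
        rwa [Matrix.star_eq_conjTranspose] at this
      have e1 : (U k)ᴴ * (U k * P * (U k)ᴴ) = P * (U k)ᴴ := by
        calc (U k)ᴴ * (U k * P * (U k)ᴴ) = ((U k)ᴴ * U k) * (P * (U k)ᴴ) := by noncomm_ring
          _ = P * (U k)ᴴ := by rw [huu, Matrix.one_mul]
      have e2 : (U k * P * (U k)ᴴ) * U k = U k * P := by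
        calc (U k * P * (U k)ᴴ) * U k = (U k * P) * ((U k)ᴴ * U k) := by noncomm_ring
          _ = U k * P := by rw [huu, Matrix.mul_one]
      set M := ∑ i, (η i : ℂ) • (F i * (P * ρ * P) * (F i)ᴴ) with hMdef
      rw [e1, Matrix.mul_assoc (P * (U k)ᴴ * M) (U k * P * (U k)ᴴ) (U k), e2]
      have hsummand : ∀ i, P * (U k)ᴴ * ((η i : ℂ) • (F i * (P * ρ * P) * (F i)ᴴ)) *
          (U k * P) = (if i = k then (d k : ℂ) else 0) • (P * ρ * P) := by
        intro i
        by_cases hik : i = k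
        · subst hik
          rw [if_pos rfl, hk1]
          simp only [Complex.ofReal_one, one_smul]
          have hX1 : (P * (U i)ᴴ) * (F i * P) = ck • P := by
            calc (P * (U i)ᴴ) * (F i * P) = (P * (U i)ᴴ) * (ck • (U i * P)) := by rw [hFk]
              _ = ck • ((P * (U i)ᴴ) * (U i * P)) := by rw [Matrix.mul_smul]
              _ = ck • (P * ((U i)ᴴ * U i) * P) := by rw [show (P * (U i)ᴴ) * (U i * P) =
                    P * ((U i)ᴴ * U i) * P by noncomm_ring]
              _ = ck • P := by rw [huu, Matrix.mul_one, hProj]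
          have hX2 : (P * (F i)ᴴ) * (U i * P) = ck • P := by
            have := congrArg conjTranspose hX1
            rw [conjTranspose_mul, conjTranspose_mul, conjTranspose_mul, conjTranspose_smul,
              conjTranspose_conjTranspose, hPH, Complex.star_def, Complex.conj_ofReal] at this
            exact this
          calc P * (U i)ᴴ * ((F i * (P * ρ * P) * (F i)ᴴ)) * (U i * P)
              = ((P * (U i)ᴴ) * (F i * P)) * ρ * ((P * (F i)ᴴ) * (U i * P)) := by noncomm_ring
            _ = (ck • P) * ρ * (ck • P) := by rw [hX1, hX2]
            _ = (ck * ck) • (P * ρ * P) := by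
                simp only [Matrix.smul_mul, Matrix.mul_smul, smul_smul]
            _ = (d i : ℂ) • (P * ρ * P) := by rw [hck2]
        · rw [if_neg hik, zero_smul]
          have hQ := hQEC k i
          rw [if_neg (fun h => hik h.symm), zero_smul] at hQ
          have h1 : (F k * P)ᴴ * (F i * P) = 0 := by
            have h2 : (F k * P)ᴴ * (F i * P) = P * (F k)ᴴ * F i * P := by
              rw [conjTranspose_mul, hPH]
              noncomm_ring
            rw [h2, hQ]
          rw [hFk, conjTranspose_smul, Matrix.smul_mul, Complex.star_def,
            Complex.conj_ofReal] at h1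
          have hz : (U k * P)ᴴ * (F i * P) = 0 := by
            rcases smul_eq_zero.mp h1 with h | h
            · exact absurd h hckne
            · exact h
          rw [conjTranspose_mul, hPH] at hz
          calc P * (U k)ᴴ * ((η i : ℂ) • (F i * (P * ρ * P) * (F i)ᴴ)) * (U k * P)
              = (η i : ℂ) • ((P * (U k)ᴴ * (F i * P)) * (ρ * P * (F i)ᴴ * (U k * P))) := by
                rw [Matrix.mul_smul, Matrix.smul_mul]
                congr 1
                noncomm_ring
            _ = 0 := by rw [hz, Matrix.zero_mul, smul_zero]
      calc P * (U k)ᴴ * M * (U k * P)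
          = ∑ i, P * (U k)ᴴ * ((η i : ℂ) • (F i * (P * ρ * P) * (F i)ᴴ)) * (U k * P) := by
            rw [hMdef, Finset.mul_sum, Finset.sum_mul]
        _ = ∑ i, (if i = k then (d k : ℂ) else 0) • (P * ρ * P) :=
            Finset.sum_congr rfl (fun i _ => hsummand i)
        _ = ((d k : ℝ) : ℂ) • (P * ρ * P) := by
            simp only [ite_smul, zero_smul, Finset.sum_ite_eq', Finset.mem_univ, if_pos]
    rw [Finset.sum_congr rfl hterm2, ← Finset.sum_smul]
    congr 1
    push_cast
    ring
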